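/- Let C, L, D be real numbers with 0 ≤ L < D < C and let γ = (C − L)/(D − L). Then γ equals the minimum of S_m over all m ≥ 1 and all speed vectors δ_1 ≥ δ_2 ≥ ... ≥ δ_m with 0 < δ_x ≤ 1 for all x that satisfy (C + λ·L)/S_m ≤ D, where S_m = δ_1 + ... + δ_m and λ = max_{1 ≤ x ≤ m} (S_m − S_x)/δ_x with S_x = δ_1 + ... + δ_x. That is: (i) every such feasible speed vector satisfies S_m ≥ γ, and (ii) if γ is not an integer, the speed vector consisting of ⌊γ⌋ entries equal to 1 followed by one entry equal to γ − ⌊γ⌋ is feasible and has S_m = γ. -/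

import Mathlib

/-- Combination of Lemmas 1 and 2: γ = (C - L)/(D - L) is the minimum total
processing capacity over all feasible speed vectors (speeds in (0,1],
nonincreasing) satisfying the schedulability condition (C + λL)/S_m ≤ D.
(i) Every feasible speed vector has total speed at least γ.
(ii) If γ is not an integer, the vector of ⌊γ⌋ unit speeds followed by one
speed γ - ⌊γ⌋ is feasible and has total speed exactly γ. -/
theorem stmt_11 (C L D : ℝ) (hL : 0 ≤ L) (hLD : L < D) (hDC : D < C)
    (γ : ℝ) (hγ : γ = (C - L) / (D - L)) :
    (∀ (m : ℕ) (hm : 1 ≤ m) (δ : ℕ → ℝ),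
      (∀ x, 1 ≤ x → x ≤ m → 0 < δ x) →
      (∀ x, 1 ≤ x → x ≤ m → δ x ≤ 1) →
      (∀ x, 1 ≤ x → x < m → δ (x + 1) ≤ δ x) →
      (C + ((Finset.Icc 1 m).sup' (Finset.nonempty_Icc.mpr hm)
          (fun x => ((∑ j ∈ Finset.Icc 1 m, δ j) - ∑ j ∈ Finset.Icc 1 x, δ j) / δ x)) * L)
          / (∑ j ∈ Finset.Icc 1 m, δ j) ≤ D →
      γ ≤ ∑ j ∈ Finset.Icc 1 m, δ j)
    ∧ ((¬ ∃ n : ℤ, γ = (n : ℝ)) →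
      ∃ (m : ℕ) (hm : 1 ≤ m) (δ : ℕ → ℝ),
        m = ⌊γ⌋.toNat + 1 ∧
        (∀ j, δ j = if j ≤ ⌊γ⌋.toNat then 1 else γ - (⌊γ⌋ : ℝ)) ∧
        (∀ x, 1 ≤ x → x ≤ m → 0 < δ x) ∧
        (∀ x, 1 ≤ x → x ≤ m → δ x ≤ 1) ∧
        (∀ x, 1 ≤ x → x < m → δ (x + 1) ≤ δ x) ∧
        (C + ((Finset.Icc 1 m).sup' (Finset.nonempty_Icc.mpr hm)
            (fun x => ((∑ j ∈ Finset.Icc 1 m, δ j) - ∑ j ∈ Finset.Icc 1 x, δ j) / δ x)) * L)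
            / (∑ j ∈ Finset.Icc 1 m, δ j) ≤ D ∧
        (∑ j ∈ Finset.Icc 1 m, δ j) = γ) := by

  have hDL : (0:ℝ) < D - L := by linarith
  have hγpos : 0 < γ := by rw [hγ]; exact div_pos (by linarith) (by linarith)
  have hγ1 : 1 < γ := by
    rw [hγ, lt_div_iff₀ hDL]; linarith
  have hγDL : γ * (D - L) = C - L := by
    rw [hγ]; field_simp
  constructor
  · intro m hm δ hpos hle hmono hsched
    have h1m : (1:ℕ) ∈ Finset.Icc 1 m := Finset.mem_Icc.mpr ⟨le_rfl, hm⟩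
    set S := ∑ j ∈ Finset.Icc 1 m, δ j with hS
    have hSpos : 0 < S := Finset.sum_pos
      (fun i hi => hpos i (Finset.mem_Icc.mp hi).1 (Finset.mem_Icc.mp hi).2) ⟨1, h1m⟩
    have hδ1 : 0 < δ 1 := hpos 1 le_rfl hm
    have hδ1le : δ 1 ≤ 1 := hle 1 le_rfl hm
    have hlam : (S - δ 1) / δ 1 ≤
        (Finset.Icc 1 m).sup' (Finset.nonempty_Icc.mpr hm)
          (fun x => (S - ∑ j ∈ Finset.Icc 1 x, δ j) / δ x) := by
      have := Finset.le_sup' (fun x => (S - ∑ j ∈ Finset.Icc 1 x, δ j) / δ x) h1m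
      simpa only [Finset.Icc_self, Finset.sum_singleton] using this
    have h1 : S - 1 ≤ (Finset.Icc 1 m).sup' (Finset.nonempty_Icc.mpr hm)
          (fun x => (S - ∑ j ∈ Finset.Icc 1 x, δ j) / δ x) := by
      refine le_trans ?_ hlam
      rw [le_div_iff₀ hδ1]
      nlinarith
    rw [div_le_iff₀ hSpos] at hsched
    rw [hγ, div_le_iff₀ hDL]
    nlinarith [mul_le_mul_of_nonneg_right h1 hL]
  · intro hnint
    have hfl1 : 1 ≤ ⌊γ⌋ := by
      rw [Int.le_floor]; exact_mod_cast hγ1.le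
    set k := ⌊γ⌋.toNat with hk
    have hk1 : 1 ≤ k := by omega
    have hkℝ : (k : ℝ) = (⌊γ⌋ : ℝ) := by
      rw [hk]; exact_mod_cast Int.toNat_of_nonneg (by omega)
    set f := γ - (⌊γ⌋ : ℝ) with hf
    have hf0 : 0 ≤ f := by have := Int.floor_le γ; linarith
    have hfne : f ≠ 0 := by
      intro h
      exact hnint ⟨⌊γ⌋, by have : γ - (⌊γ⌋:ℝ) = 0 := h; linarith⟩
    have hfpos : 0 < f := lt_of_le_of_ne hf0 (Ne.symm hfne)
    have hf1 : f < 1 := by have := Int.lt_floor_add_one γ; linarith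
    set δ : ℕ → ℝ := fun j => if j ≤ k then 1 else f with hδ
    have hsx : ∀ x, x ≤ k → ∑ j ∈ Finset.Icc 1 x, δ j = (x:ℝ) := by
      intro x hx
      rw [Finset.sum_congr rfl (fun j hj => by
        simp only [hδ]
        rw [if_pos (le_trans (Finset.mem_Icc.mp hj).2 hx)])]
      simp [Nat.card_Icc]
    have hStot : ∑ j ∈ Finset.Icc 1 (k+1), δ j = γ := by
      rw [Finset.sum_Icc_succ_top (by omega), hsx k le_rfl]
      simp only [hδ]
      rw [if_neg (by omega), hkℝ]
      simp [hf]
    refine ⟨k+1, by omega, δ, rfl, fun j => rfl, ?_, ?_, ?_, ?_, ?_⟩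
    · intro x hx1 hx2
      simp only [hδ]
      split
      · norm_num
      · exact hfpos
    · intro x hx1 hx2
      simp only [hδ]
      split
      · exact le_rfl
      · exact hf1.le
    · intro x hx1 hx2
      simp only [hδ]
      by_cases h : x + 1 ≤ k
      · rw [if_pos h, if_pos (by omega)]
      · rw [if_neg h]
        split
        · exact hf1.le
        · exact le_rfl
    · rw [hStot, div_le_iff₀ hγpos]
      have hlam : (Finset.Icc 1 (k+1)).sup' (Finset.nonempty_Icc.mpr (by omega))
          (fun x => (γ - ∑ j ∈ Finset.Icc 1 x, δ j) / δ x) ≤ γ - 1 := by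
        apply Finset.sup'_le
        intro x hx
        obtain ⟨hx1, hx2⟩ := Finset.mem_Icc.mp hx
        by_cases h : x ≤ k
        · rw [hsx x h]
          simp only [hδ]
          rw [if_pos h]
          have : (1:ℝ) ≤ (x:ℝ) := by exact_mod_cast hx1
          simp
          linarith
        · have hxk : x = k + 1 := by omega
          rw [hxk, hStot]
          simp only [hδ]
          rw [if_neg (by omega)]
          simp
          linarith
      have hlam' := mul_le_mul_of_nonneg_right hlam hL
      simp only [hStot] at *
      nlinarith
    · exact hStot
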